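/- arXiv:1905.02408 — 3 statements merged into one kernel-verified Lean document; each statement's English description precedes it below -/
import Mathlib

section
/- With z(t,x;b,y) = ((t-b)^2-(y-x)^2)/((t+b+2)^2-(y-x)^2) and t > -1, the identity (∂z/∂t)^2 - (∂z/∂x)^2 = 4(1+b) z(1-z) / ((1+t)((t+b+2)^2-(y-x)^2)) holds wherever the denominator is nonzero. -/
noncomputable def zfun (t x b y : ℝ) : ℝ :=
  ((t - b)^2 - (y - x)^2) / ((t + b + 2)^2 - (y - x)^2)

lemma deriv_t (t x b y : ℝ) (hD : (t + b + 2)^2 - (y - x)^2 ≠ 0) :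
    deriv (fun t' => zfun t' x b y) t =
      (2*(t-b) * ((t + b + 2)^2 - (y - x)^2) - ((t - b)^2 - (y - x)^2) * (2*(t+b+2)))
        / ((t + b + 2)^2 - (y - x)^2)^2 := by
  have h1 : HasDerivAt (fun t' : ℝ => (t' - b)^2 - (y - x)^2) (2*(t-b)) t := by
    have := ((hasDerivAt_id t).sub_const b).pow 2
    simpa [mul_comm] using this.sub_const ((y - x)^2)
  have h2 : HasDerivAt (fun t' : ℝ => (t' + b + 2)^2 - (y - x)^2) (2*(t+b+2)) t := by
    have := (((hasDerivAt_id t).add_const b).add_const 2).pow 2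
    simpa [mul_comm] using this.sub_const ((y - x)^2)
  have := (h1.div h2 hD).deriv
  simpa [zfun, Pi.div_def] using this

lemma deriv_x (t x b y : ℝ) (hD : (t + b + 2)^2 - (y - x)^2 ≠ 0) :
    deriv (fun x' => zfun t x' b y) x =
      (2*(y-x) * ((t + b + 2)^2 - (y - x)^2) - ((t - b)^2 - (y - x)^2) * (2*(y-x)))
        / ((t + b + 2)^2 - (y - x)^2)^2 := by
  have hy : HasDerivAt (fun x' : ℝ => (y - x')^2) (2*(y-x)*(-1)) x := by
    have := ((hasDerivAt_id x).const_sub y).pow 2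
    simpa [mul_comm, Pi.pow_def] using this
  have h1 : HasDerivAt (fun x' : ℝ => (t - b)^2 - (y - x')^2) (2*(y-x)) x := by
    have := (hasDerivAt_const x ((t-b)^2)).sub hy
    simpa [Pi.sub_def] using this
  have h2 : HasDerivAt (fun x' : ℝ => (t + b + 2)^2 - (y - x')^2) (2*(y-x)) x := by
    have := (hasDerivAt_const x ((t+b+2)^2)).sub hy
    simpa [Pi.sub_def] using this
  have := (h1.div h2 hD).deriv
  simpa [zfun, Pi.div_def] using this

theorem deriv_sq_diff_z (t x b y : ℝ) (hD : (t + b + 2)^2 - (y - x)^2 ≠ 0) (ht : -1 < t) :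
    (deriv (fun t' => zfun t' x b y) t)^2 - (deriv (fun x' => zfun t x' b y) x)^2
      = 4 * (1 + b) * (zfun t x b y * (1 - zfun t x b y))
          / ((1 + t) * ((t + b + 2)^2 - (y - x)^2)) := by
  have h1t : (1:ℝ) + t ≠ 0 := by linarith
  rw [deriv_t t x b y hD, deriv_x t x b y hD, zfun]
  field_simp
  ring
end

section
/- With z(t,x;b,y) = ((t-b)^2-(y-x)^2)/((t+b+2)^2-(y-x)^2), t > -1, b > -1, D = (t+b+2)^2-(y-x)^2 ≠ 0, and any real parameter √δ (denoted s), the combination ∂²z/∂t² − ∂²z/∂x² + (1−s)(1+t)^{-1}∂z/∂t + 2(s−1)D^{-1}[(t+b+2)∂z/∂t − (y−x)∂z/∂x] equals 4(1+b)[1−(2−s)z] / ((1+t)D). -/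
private lemma hMt (b c : ℝ) (u : ℝ) :
    HasDerivAt (fun u : ℝ => (u + b + 2)^2 - c) (2*(u+b+2)) u := by
  have h1 : HasDerivAt (fun u : ℝ => u + b + 2) 1 u :=
    ((hasDerivAt_id u).add_const b).add_const 2
  simpa [mul_comm] using ((h1.pow 2).sub_const c)

private lemma hNt (b c : ℝ) (u : ℝ) :
    HasDerivAt (fun u : ℝ => (u - b)^2 - c) (2*(u-b)) u := by
  have h1 : HasDerivAt (fun u : ℝ => u - b) 1 u := (hasDerivAt_id u).sub_const b
  simpa [mul_comm] using ((h1.pow 2).sub_const c)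

private lemma hNx (c y : ℝ) (v : ℝ) :
    HasDerivAt (fun v : ℝ => c - (y - v)^2) (2*(y-v)) v := by
  have h1 : HasDerivAt (fun v : ℝ => y - v) (-1) v := by
    simpa using (hasDerivAt_id v).const_sub y
  have := (h1.fun_pow 2).const_sub c
  refine this.congr_deriv ?_; push_cast; ring

private lemma hMx (c y : ℝ) (v : ℝ) :
    HasDerivAt (fun v : ℝ => c - (y - v)^2) (2*(y-v)) v := hNx c y v

-- first derivative in t
private lemma dzt (x b y : ℝ) (u : ℝ) (h : (u + b + 2)^2 - (y - x)^2 ≠ 0) :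
    HasDerivAt (fun t' => zfun t' x b y)
      ((2*(u-b) * ((u+b+2)^2-(y-x)^2) - ((u-b)^2-(y-x)^2) * (2*(u+b+2))) /
        ((u+b+2)^2-(y-x)^2)^2) u := by
  exact (hNt b ((y-x)^2) u).div (hMt b ((y-x)^2) u) h

-- first derivative in x
private lemma dzx (t b y : ℝ) (v : ℝ) (h : (t + b + 2)^2 - (y - v)^2 ≠ 0) :
    HasDerivAt (fun x' => zfun t x' b y)
      ((2*(y-v) * ((t+b+2)^2-(y-v)^2) - ((t-b)^2-(y-v)^2) * (2*(y-v))) /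
        ((t+b+2)^2-(y-v)^2)^2) v := by
  exact (hNx ((t-b)^2) y v).div (hMx ((t+b+2)^2) y v) h

private lemma combine (M T n1 n2 p1 p2 A w c1 c2 R : ℝ) (hM : M ≠ 0) (hT : T ≠ 0)
    (key : T * (n1 - n2) + c1 * M * p1 + c2 * T * (A * p1 - w * p2) = R * M) :
    n1 / M^3 - n2 / M^3 + c1 * T⁻¹ * (p1 / M^2)
      + c2 * M⁻¹ * (A * (p1 / M^2) - w * (p2 / M^2)) = R / (T * M^2) := by
  have e : n1 / M^3 - n2 / M^3 + c1 * T⁻¹ * (p1 / M^2)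
      + c2 * M⁻¹ * (A * (p1 / M^2) - w * (p2 / M^2))
      = (T * (n1 - n2) + c1 * M * p1 + c2 * T * (A * p1 - w * p2)) / (T * M^3) := by
    field_simp
  rw [e, key]
  rw [div_eq_div_iff (by positivity) (by positivity)]
  ring

set_option maxHeartbeats 1000000 in
theorem Fz_coefficient (t x b y s : ℝ) (ht : -1 < t) (hb : -1 < b)
    (hD : (t + b + 2)^2 - (y - x)^2 ≠ 0) :
    deriv (deriv (fun t' => zfun t' x b y)) t - deriv (deriv (fun x' => zfun t x' b y)) x
      + (1 - s) * (1 + t)⁻¹ * deriv (fun t' => zfun t' x b y) t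
      + 2 * (s - 1) * ((t + b + 2)^2 - (y - x)^2)⁻¹ *
          ((t + b + 2) * deriv (fun t' => zfun t' x b y) t
            - (y - x) * deriv (fun x' => zfun t x' b y) x)
      = 4 * (1 + b) * (1 - (2 - s) * zfun t x b y)
          / ((1 + t) * ((t + b + 2)^2 - (y - x)^2)) := by
  have ht1 : (1 : ℝ) + t ≠ 0 := by linarith
  -- first derivatives at the point
  have h1t : deriv (fun t' => zfun t' x b y) t
      = (2*(t-b) * ((t+b+2)^2-(y-x)^2) - ((t-b)^2-(y-x)^2) * (2*(t+b+2))) /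
        ((t+b+2)^2-(y-x)^2)^2 := (dzt x b y t hD).deriv
  have h1x : deriv (fun x' => zfun t x' b y) x
      = (2*(y-x) * ((t+b+2)^2-(y-x)^2) - ((t-b)^2-(y-x)^2) * (2*(y-x))) /
        ((t+b+2)^2-(y-x)^2)^2 := (dzx t b y x hD).deriv
  -- second derivative in t
  have hevt : ∀ᶠ u in nhds t, (u + b + 2)^2 - (y - x)^2 ≠ 0 := by
    have hc : Continuous (fun u : ℝ => (u + b + 2)^2 - (y - x)^2) := by continuity
    exact hc.continuousAt.eventually_ne hD
  have heqt : deriv (fun t' => zfun t' x b y) =ᶠ[nhds t]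
      (fun u => (2*(u-b) * ((u+b+2)^2-(y-x)^2) - ((u-b)^2-(y-x)^2) * (2*(u+b+2))) /
        ((u+b+2)^2-(y-x)^2)^2) := by
    filter_upwards [hevt] with u hu
    exact (dzt x b y u hu).deriv
  have hPt : HasDerivAt
      (fun u : ℝ => 2*(u-b) * ((u+b+2)^2-(y-x)^2) - ((u-b)^2-(y-x)^2) * (2*(u+b+2)))
      (2 * ((t+b+2)^2-(y-x)^2) + 2*(t-b) * (2*(t+b+2))
        - ((2*(t-b)) * (2*(t+b+2)) + ((t-b)^2-(y-x)^2) * 2)) t := by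
    have hA : HasDerivAt (fun u : ℝ => 2*(u-b)) 2 t := by
      simpa using ((hasDerivAt_id t).sub_const b).const_mul 2
    have hB : HasDerivAt (fun u : ℝ => 2*(u+b+2)) 2 t := by
      simpa using (((hasDerivAt_id t).add_const b).add_const 2).const_mul 2
    exact (hA.mul (hMt b ((y-x)^2) t)).sub ((hNt b ((y-x)^2) t).mul hB)
  have hQt : HasDerivAt (fun u : ℝ => ((u+b+2)^2-(y-x)^2)^2)
      (2 * ((t+b+2)^2-(y-x)^2) * (2*(t+b+2))) t := by
    simpa [mul_comm, mul_assoc] using (hMt b ((y-x)^2) t).fun_pow 2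
  have hQtne : ((t+b+2)^2-(y-x)^2)^2 ≠ 0 := pow_ne_zero 2 hD
  have h2t : deriv (deriv (fun t' => zfun t' x b y)) t
      = ((2 * ((t+b+2)^2-(y-x)^2) + 2*(t-b) * (2*(t+b+2))
            - ((2*(t-b)) * (2*(t+b+2)) + ((t-b)^2-(y-x)^2) * 2))
           * ((t+b+2)^2-(y-x)^2)^2
         - (2*(t-b) * ((t+b+2)^2-(y-x)^2) - ((t-b)^2-(y-x)^2) * (2*(t+b+2)))
           * (2 * ((t+b+2)^2-(y-x)^2) * (2*(t+b+2))))
        / (((t+b+2)^2-(y-x)^2)^2)^2 := by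
    rw [heqt.deriv_eq]
    exact (hPt.div hQt hQtne).deriv
  -- second derivative in x
  have hevx : ∀ᶠ v in nhds x, (t + b + 2)^2 - (y - v)^2 ≠ 0 := by
    have hc : Continuous (fun v : ℝ => (t + b + 2)^2 - (y - v)^2) := by continuity
    exact hc.continuousAt.eventually_ne hD
  have heqx : deriv (fun x' => zfun t x' b y) =ᶠ[nhds x]
      (fun v => (2*(y-v) * ((t+b+2)^2-(y-v)^2) - ((t-b)^2-(y-v)^2) * (2*(y-v))) /
        ((t+b+2)^2-(y-v)^2)^2) := by
    filter_upwards [hevx] with v hv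
    exact (dzx t b y v hv).deriv
  have hPx : HasDerivAt
      (fun v : ℝ => 2*(y-v) * ((t+b+2)^2-(y-v)^2) - ((t-b)^2-(y-v)^2) * (2*(y-v)))
      ((-2) * ((t+b+2)^2-(y-x)^2) + 2*(y-x) * (2*(y-x))
        - ((2*(y-x)) * (2*(y-x)) + ((t-b)^2-(y-x)^2) * (-2))) x := by
    have hA : HasDerivAt (fun v : ℝ => 2*(y-v)) (-2) x := by
      have h1 : HasDerivAt (fun v : ℝ => y - v) (-1) x := by
        simpa using (hasDerivAt_id x).const_sub y
      simpa using h1.const_mul 2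
    exact (hA.mul (hMx ((t+b+2)^2) y x)).sub ((hNx ((t-b)^2) y x).mul hA)
  have hQx : HasDerivAt (fun v : ℝ => ((t+b+2)^2-(y-v)^2)^2)
      (2 * ((t+b+2)^2-(y-x)^2) * (2*(y-x))) x := by
    simpa [mul_comm, mul_assoc] using (hMx ((t+b+2)^2) y x).fun_pow 2
  have h2x : deriv (deriv (fun x' => zfun t x' b y)) x
      = (((-2) * ((t+b+2)^2-(y-x)^2) + 2*(y-x) * (2*(y-x))
            - ((2*(y-x)) * (2*(y-x)) + ((t-b)^2-(y-x)^2) * (-2)))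
           * ((t+b+2)^2-(y-x)^2)^2
         - (2*(y-x) * ((t+b+2)^2-(y-x)^2) - ((t-b)^2-(y-x)^2) * (2*(y-x)))
           * (2 * ((t+b+2)^2-(y-x)^2) * (2*(y-x))))
        / (((t+b+2)^2-(y-x)^2)^2)^2 := by
    rw [heqx.deriv_eq]
    exact (hPx.div hQx hQtne).deriv
  have h2t' : deriv (deriv (fun t' => zfun t' x b y)) t
      = ((2*((t+b+2)^2-(y-x)^2) - 2*((t-b)^2-(y-x)^2)) * ((t+b+2)^2-(y-x)^2)
          - 4*(t+b+2) * (2*(t-b)*((t+b+2)^2-(y-x)^2) - 2*(t+b+2)*((t-b)^2-(y-x)^2)))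
        / ((t+b+2)^2-(y-x)^2)^3 := by
    rw [h2t]
    have hnum : ((2 * ((t + b + 2) ^ 2 - (y - x) ^ 2) + 2 * (t - b) * (2 * (t + b + 2)) -
            (2 * (t - b) * (2 * (t + b + 2)) + ((t - b) ^ 2 - (y - x) ^ 2) * 2)) *
          ((t + b + 2) ^ 2 - (y - x) ^ 2) ^ 2 -
        (2 * (t - b) * ((t + b + 2) ^ 2 - (y - x) ^ 2) - ((t - b) ^ 2 - (y - x) ^ 2) * (2 * (t + b + 2))) *
          (2 * ((t + b + 2) ^ 2 - (y - x) ^ 2) * (2 * (t + b + 2))))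
      = ((t + b + 2) ^ 2 - (y - x) ^ 2) *
        ((2*((t+b+2)^2-(y-x)^2) - 2*((t-b)^2-(y-x)^2)) * ((t+b+2)^2-(y-x)^2)
          - 4*(t+b+2) * (2*(t-b)*((t+b+2)^2-(y-x)^2) - 2*(t+b+2)*((t-b)^2-(y-x)^2))) := by
      ring
    have hden : (((t + b + 2) ^ 2 - (y - x) ^ 2) ^ 2) ^ 2
      = ((t + b + 2) ^ 2 - (y - x) ^ 2) * ((t+b+2)^2-(y-x)^2)^3 := by ring
    rw [hnum, hden, mul_div_mul_left _ _ hD]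
  have h2x' : deriv (deriv (fun x' => zfun t x' b y)) x
      = ((-2*((t+b+2)^2-(y-x)^2) + 2*((t-b)^2-(y-x)^2)) * ((t+b+2)^2-(y-x)^2)
          - 8*(y-x)^2 * (((t+b+2)^2-(y-x)^2) - ((t-b)^2-(y-x)^2)))
        / ((t+b+2)^2-(y-x)^2)^3 := by
    rw [h2x]
    have hnum : ((-2 * ((t + b + 2) ^ 2 - (y - x) ^ 2) + 2 * (y - x) * (2 * (y - x)) -
            (2 * (y - x) * (2 * (y - x)) + ((t - b) ^ 2 - (y - x) ^ 2) * -2)) *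
          ((t + b + 2) ^ 2 - (y - x) ^ 2) ^ 2 -
        (2 * (y - x) * ((t + b + 2) ^ 2 - (y - x) ^ 2) - ((t - b) ^ 2 - (y - x) ^ 2) * (2 * (y - x))) *
          (2 * ((t + b + 2) ^ 2 - (y - x) ^ 2) * (2 * (y - x))))
      = ((t + b + 2) ^ 2 - (y - x) ^ 2) *
        ((-2*((t+b+2)^2-(y-x)^2) + 2*((t-b)^2-(y-x)^2)) * ((t+b+2)^2-(y-x)^2)
          - 8*(y-x)^2 * (((t+b+2)^2-(y-x)^2) - ((t-b)^2-(y-x)^2))) := by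
      ring
    have hden : (((t + b + 2) ^ 2 - (y - x) ^ 2) ^ 2) ^ 2
      = ((t + b + 2) ^ 2 - (y - x) ^ 2) * ((t+b+2)^2-(y-x)^2)^3 := by ring
    rw [hnum, hden, mul_div_mul_left _ _ hD]
  rw [h1t, h1x, h2t', h2x', zfun]
  have rhs_eq : 4 * (1 + b) * (1 - (2 - s) *
        (((t - b)^2 - (y - x)^2) / ((t + b + 2)^2 - (y - x)^2)))
        / ((1 + t) * ((t + b + 2)^2 - (y - x)^2))
      = (4 * (1 + b) * (((t + b + 2)^2 - (y - x)^2)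
            - (2 - s) * ((t - b)^2 - (y - x)^2)))
        / ((1 + t) * ((t + b + 2)^2 - (y - x)^2)^2) := by
    rw [div_eq_div_iff (mul_ne_zero ht1 hD) (mul_ne_zero ht1 (pow_ne_zero 2 hD))]
    field_simp
  rw [rhs_eq]
  have key : (1 + t) *
        (((2*((t+b+2)^2-(y-x)^2) - 2*((t-b)^2-(y-x)^2)) * ((t+b+2)^2-(y-x)^2)
          - 4*(t+b+2) * (2*(t-b)*((t+b+2)^2-(y-x)^2) - 2*(t+b+2)*((t-b)^2-(y-x)^2)))
         - ((-2*((t+b+2)^2-(y-x)^2) + 2*((t-b)^2-(y-x)^2)) * ((t+b+2)^2-(y-x)^2)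
          - 8*(y-x)^2 * (((t+b+2)^2-(y-x)^2) - ((t-b)^2-(y-x)^2))))
      + (1 - s) * ((t+b+2)^2-(y-x)^2) *
          (2*(t-b) * ((t+b+2)^2-(y-x)^2) - ((t-b)^2-(y-x)^2) * (2*(t+b+2)))
      + 2 * (s - 1) * (1 + t) *
          ((t+b+2) * (2*(t-b) * ((t+b+2)^2-(y-x)^2) - ((t-b)^2-(y-x)^2) * (2*(t+b+2)))
            - (y-x) * (2*(y-x) * ((t+b+2)^2-(y-x)^2) - ((t-b)^2-(y-x)^2) * (2*(y-x))))
      = (4 * (1 + b) * (((t + b + 2)^2 - (y - x)^2)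
            - (2 - s) * ((t - b)^2 - (y - x)^2))) * ((t+b+2)^2-(y-x)^2) := by
    ring
  exact combine _ _ _ _ _ _ _ _ _ _ _ hD ht1 key
end

section
/- On the characteristics y = x ± (t−b) with 0 ≤ b ≤ t, the combination 2·∂E/∂b ∓ 2·∂E/∂y − (μ/(1+b))·E vanishes identically: [2∂E/∂b ∓ 2∂E/∂y − (μ/(1+b))E](t,x;b,x±(t−b)) = 0. -/
noncomputable def hyp (a b c z : ℝ) : ℝ :=
  ∑' n : ℕ, (∏ i ∈ Finset.range n, ((a + (i : ℝ)) * (b + (i : ℝ)) / ((c + (i : ℝ)) * ((i : ℝ) + 1)))) * z ^ n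

noncomputable def Ker (μ ν2 t x b y : ℝ) : ℝ :=
  (1 + t) ^ (-μ/2 + (1 - Real.sqrt ((μ - 1)^2 - 4*ν2))/2) *
  (1 + b) ^ (μ/2 + (1 - Real.sqrt ((μ - 1)^2 - 4*ν2))/2) *
  (((t + b + 2)^2 - (y - x)^2) ^ ((Real.sqrt ((μ - 1)^2 - 4*ν2) - 1)/2)) *
  hyp ((1 - Real.sqrt ((μ - 1)^2 - 4*ν2))/2) ((1 - Real.sqrt ((μ - 1)^2 - 4*ν2))/2) 1 (zfun t x b y)

namespace KernelCharAux

open FormalMultilinearSeries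

noncomputable def cseq (a : ℝ) : ℕ → ℝ :=
  fun n => ∏ i ∈ Finset.range n, ((a + (i : ℝ)) * (a + (i : ℝ)) / ((1 + (i : ℝ)) * ((i : ℝ) + 1)))

lemma hyp_zero (a b c : ℝ) : hyp a b c 0 = 1 := by
  unfold hyp
  rw [tsum_eq_single 0]
  · simp
  · intro n hn; simp [zero_pow hn]

lemma cseq_bound (a : ℝ) (n : ℕ) : |cseq a n| ≤ ((max 1 |a|)^2) ^ n := by
  unfold cseq
  rw [Finset.abs_prod]
  calc ∏ i ∈ Finset.range n, |((a + (i : ℝ)) * (a + (i : ℝ)) / ((1 + (i : ℝ)) * ((i : ℝ) + 1)))|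
      ≤ ∏ i ∈ Finset.range n, (max 1 |a|)^2 := by
        apply Finset.prod_le_prod (fun i _ => abs_nonneg _)
        intro i _
        have hi : (0:ℝ) ≤ (i:ℝ) := Nat.cast_nonneg i
        have h1 : |a + (i:ℝ)| ≤ max 1 |a| * (1 + (i:ℝ)) := by
          have := abs_add_le a (i:ℝ)
          have h2 : |a| ≤ max 1 |a| := le_max_right _ _
          have h3 : (1:ℝ) ≤ max 1 |a| := le_max_left _ _
          rw [abs_of_nonneg hi] at this
          nlinarith
        have hd : (0:ℝ) < (1 + (i:ℝ)) * ((i:ℝ) + 1) := by positivity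
        rw [abs_div, abs_mul, abs_of_pos hd, div_le_iff₀ hd]
        have h4 : (0:ℝ) ≤ |a + (i:ℝ)| := abs_nonneg _
        nlinarith
    _ = ((max 1 |a|)^2) ^ n := by rw [Finset.prod_const, Finset.card_range]

lemma radius_pos (a : ℝ) : 0 < (ofScalars ℝ (cseq a)).radius := by
  set M : ℝ := (max 1 |a|)^2 with hM
  have hM1 : (1:ℝ) ≤ M := by
    have : (1:ℝ) ≤ max 1 |a| := le_max_left _ _
    nlinarith
  have hMpos : (0:ℝ) < M := by linarith
  have hr : (0:ℝ) ≤ 1/(2*M) := by positivity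
  set r : NNReal := ⟨1/(2*M), hr⟩ with hrdef
  have hle : (r : ENNReal) ≤ (ofScalars ℝ (cseq a)).radius := by
    apply le_radius_of_bound _ 1
    intro n
    have h1 : ‖ofScalars ℝ (cseq a) n‖ = |cseq a n| := by
      rw [ofScalars_norm]; rfl
    rw [h1]
    have h2 : ((r:ℝ)) ^ n = (1/(2*M))^n := rfl
    rw [h2]
    calc |cseq a n| * (1/(2*M))^n ≤ M^n * (1/(2*M))^n := by
          apply mul_le_mul_of_nonneg_right (cseq_bound a n) (by positivity)
      _ = (M * (1/(2*M)))^n := by rw [mul_pow]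
      _ = (1/2:ℝ)^n := by congr 1; field_simp
      _ ≤ 1 := by
          apply pow_le_one₀ <;> norm_num
  refine lt_of_lt_of_le ?_ hle
  rw [ENNReal.coe_pos]
  apply NNReal.coe_pos.mp
  show (0:ℝ) < 1/(2*M)
  positivity

lemma hyp_eq_sum (a : ℝ) : (fun z => hyp a a 1 z) = (ofScalars ℝ (cseq a)).sum := by
  funext z
  unfold hyp FormalMultilinearSeries.sum
  apply tsum_congr
  intro n
  rw [ofScalars_apply_eq]
  simp [cseq, smul_eq_mul]

lemma hasDerivAt_hyp (a : ℝ) : HasDerivAt (fun z => hyp a a 1 z) (a^2) 0 := by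
  have h := ((ofScalars ℝ (cseq a)).hasFPowerSeriesOnBall (radius_pos a)).hasFPowerSeriesAt
  rw [← hyp_eq_sum a] at h
  have h2 := h.hasDerivAt
  refine h2.congr_deriv (Eq.symm ?_)
  rw [ofScalars_apply_eq]
  simp [cseq]
  ring

noncomputable def Kg (s μ t x b y : ℝ) : ℝ :=
  (1 + t) ^ (-μ/2 + (1 - s)/2) *
  (1 + b) ^ (μ/2 + (1 - s)/2) *
  (((t + b + 2)^2 - (y - x)^2) ^ ((s - 1)/2)) *
  hyp ((1 - s)/2) ((1 - s)/2) 1 (zfun t x b y)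

section lemmas
variable (s μ t x b y0 : ℝ)

lemma zfun_zero (hsq : (y0 - x)^2 = (t - b)^2) : zfun t x b y0 = 0 := by
  unfold zfun; rw [hsq]; simp

lemma Kg_at (hsq : (y0 - x)^2 = (t - b)^2) :
    Kg s μ t x b y0 =
    (1 + t) ^ (-μ/2 + (1 - s)/2) * (1 + b) ^ (μ/2 + (1 - s)/2) *
      (((t + b + 2)^2 - (y0 - x)^2) ^ ((s - 1)/2)) := by
  unfold Kg
  rw [zfun_zero t x b y0 hsq, hyp_zero, mul_one]

lemma hasDerivAt_Kg_b (hsq : (y0 - x)^2 = (t - b)^2) (hb : 0 ≤ b) (hbt : b ≤ t) :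
    HasDerivAt (fun b' => Kg s μ t x b' y0)
      ((1 + t) ^ (-μ/2 + (1 - s)/2) * (1 + b) ^ (μ/2 + (1 - s)/2) *
        (((t + b + 2)^2 - (y0 - x)^2) ^ ((s - 1)/2)) *
        ((μ/2 + (1 - s)/2)/(1 + b) + (s - 1)*(t + b + 2)/((t + b + 2)^2 - (y0 - x)^2)
          - (1 - s)^2/2*(t - b)/((t + b + 2)^2 - (y0 - x)^2))) b := by
  have hb1 : (0:ℝ) < 1 + b := by linarith
  have hQ : (0:ℝ) < (t + b + 2)^2 - (y0 - x)^2 := by rw [hsq]; nlinarith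
  have h1 : HasDerivAt (fun b' : ℝ => 1 + b') 1 b := by
    simpa using (hasDerivAt_id b).const_add 1
  have hg1 : HasDerivAt (fun b' => (1 + b') ^ (μ/2 + (1 - s)/2))
      (1 * (μ/2 + (1 - s)/2) * (1 + b) ^ (μ/2 + (1 - s)/2 - 1)) b :=
    h1.rpow_const (Or.inl hb1.ne')
  have h2 : HasDerivAt (fun b' : ℝ => t + b' + 2) 1 b := by
    simpa using ((hasDerivAt_id b).const_add t).add_const 2
  have hu : HasDerivAt (fun b' => (t + b' + 2)^2 - (y0 - x)^2) (2*(t + b + 2)) b := by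
    have h3 := (h2.pow 2).sub_const ((y0 - x)^2)
    refine h3.congr_deriv (Eq.symm ?_)
    push_cast; ring
  have hg2 : HasDerivAt (fun b' => ((t + b' + 2)^2 - (y0 - x)^2) ^ ((s - 1)/2))
      (2*(t + b + 2) * ((s - 1)/2) * (((t + b + 2)^2 - (y0 - x)^2) ^ ((s - 1)/2 - 1))) b :=
    hu.rpow_const (Or.inl hQ.ne')
  have h4 : HasDerivAt (fun b' : ℝ => t - b') (-1) b := by
    simpa using (hasDerivAt_id b).const_sub t
  have hp : HasDerivAt (fun b' => (t - b')^2 - (y0 - x)^2) (-(2*(t - b))) b := by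
    have h5 := (h4.pow 2).sub_const ((y0 - x)^2)
    refine h5.congr_deriv (Eq.symm ?_)
    push_cast; ring
  have hz : HasDerivAt (fun b' => zfun t x b' y0)
      (-(2*(t - b)) / ((t + b + 2)^2 - (y0 - x)^2)) b := by
    have h6 := hp.div hu hQ.ne'
    have h7 : ((-(2*(t - b)) * ((t + b + 2)^2 - (y0 - x)^2)
        - ((t - b)^2 - (y0 - x)^2) * (2*(t + b + 2))) / ((t + b + 2)^2 - (y0 - x)^2)^2)
        = -(2*(t - b)) / ((t + b + 2)^2 - (y0 - x)^2) := by
      have h0 : (t - b)^2 - (y0 - x)^2 = 0 := by rw [hsq]; ring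
      rw [h0]
      field_simp
      ring
    rw [h7] at h6
    exact h6
  have hz0 := zfun_zero t x b y0 hsq
  have hF : HasDerivAt (fun b' => hyp ((1 - s)/2) ((1 - s)/2) 1 (zfun t x b' y0))
      (((1 - s)/2)^2 * (-(2*(t - b)) / ((t + b + 2)^2 - (y0 - x)^2))) b := by
    have h8 := hasDerivAt_hyp ((1 - s)/2)
    rw [← hz0] at h8
    exact h8.comp b hz
  have hmain := ((hg1.const_mul ((1 + t) ^ (-μ/2 + (1 - s)/2))).mul hg2).mul hF
  refine hmain.congr_deriv (Eq.symm ?_)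
  rw [Real.rpow_sub hb1, Real.rpow_one, Real.rpow_sub hQ, Real.rpow_one, hz0, hyp_zero]
  simp only [Pi.mul_apply]
  field_simp
  ring

lemma hasDerivAt_Kg_y (hsq : (y0 - x)^2 = (t - b)^2) (hb : 0 ≤ b) (hbt : b ≤ t) :
    HasDerivAt (fun y' => Kg s μ t x b y')
      ((1 + t) ^ (-μ/2 + (1 - s)/2) * (1 + b) ^ (μ/2 + (1 - s)/2) *
        (((t + b + 2)^2 - (y0 - x)^2) ^ ((s - 1)/2)) *
        ((s - 1)*(-(y0 - x))/((t + b + 2)^2 - (y0 - x)^2)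
          - (1 - s)^2/2*(y0 - x)/((t + b + 2)^2 - (y0 - x)^2))) y0 := by
  have hQ : (0:ℝ) < (t + b + 2)^2 - (y0 - x)^2 := by rw [hsq]; nlinarith
  have h2 : HasDerivAt (fun y' : ℝ => y' - x) 1 y0 := by
    simpa using (hasDerivAt_id y0).sub_const x
  have hu : HasDerivAt (fun y' => (t + b + 2)^2 - (y' - x)^2) (-(2*(y0 - x))) y0 := by
    have h3 := (h2.pow 2).const_sub ((t + b + 2)^2)
    refine h3.congr_deriv (Eq.symm ?_)
    push_cast; ring
  have hg2 : HasDerivAt (fun y' => ((t + b + 2)^2 - (y' - x)^2) ^ ((s - 1)/2))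
      (-(2*(y0 - x)) * ((s - 1)/2) * (((t + b + 2)^2 - (y0 - x)^2) ^ ((s - 1)/2 - 1))) y0 :=
    hu.rpow_const (Or.inl hQ.ne')
  have hp : HasDerivAt (fun y' => (t - b)^2 - (y' - x)^2) (-(2*(y0 - x))) y0 := by
    have h5 := (h2.pow 2).const_sub ((t - b)^2)
    refine h5.congr_deriv (Eq.symm ?_)
    push_cast; ring
  have hz : HasDerivAt (fun y' => zfun t x b y')
      (-(2*(y0 - x)) / ((t + b + 2)^2 - (y0 - x)^2)) y0 := by
    have h6 := hp.div hu hQ.ne'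
    have h7 : ((-(2*(y0 - x)) * ((t + b + 2)^2 - (y0 - x)^2)
        - ((t - b)^2 - (y0 - x)^2) * (-(2*(y0 - x)))) / ((t + b + 2)^2 - (y0 - x)^2)^2)
        = -(2*(y0 - x)) / ((t + b + 2)^2 - (y0 - x)^2) := by
      have h0 : (t - b)^2 - (y0 - x)^2 = 0 := by rw [hsq]; ring
      rw [h0]
      field_simp
      ring
    rw [h7] at h6
    exact h6
  have hz0 := zfun_zero t x b y0 hsq
  have hF : HasDerivAt (fun y' => hyp ((1 - s)/2) ((1 - s)/2) 1 (zfun t x b y'))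
      (((1 - s)/2)^2 * (-(2*(y0 - x)) / ((t + b + 2)^2 - (y0 - x)^2))) y0 := by
    have h8 := hasDerivAt_hyp ((1 - s)/2)
    rw [← hz0] at h8
    exact h8.comp y0 hz
  have hmain := ((hg2.const_mul ((1 + t) ^ (-μ/2 + (1 - s)/2) * (1 + b) ^ (μ/2 + (1 - s)/2))).mul hF)
  refine hmain.congr_deriv (Eq.symm ?_)
  rw [Real.rpow_sub hQ, Real.rpow_one, hz0, hyp_zero]
  field_simp
  ring

end lemmas

end KernelCharAux

theorem kernel_characteristic_b_y_derivatives (μ ν2 : ℝ) (hμ : 0 ≤ μ) (hν : 0 ≤ ν2)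
    (hδ : 0 ≤ (μ - 1)^2 - 4*ν2) (t x b : ℝ) (hb : 0 ≤ b) (hbt : b ≤ t) :
    (2 * deriv (fun b' => Ker μ ν2 t x b' (x + (t - b))) b
        - 2 * deriv (fun y' => Ker μ ν2 t x b y') (x + (t - b))
        - μ / (1 + b) * Ker μ ν2 t x b (x + (t - b)) = 0) ∧
    (2 * deriv (fun b' => Ker μ ν2 t x b' (x - (t - b))) b
        + 2 * deriv (fun y' => Ker μ ν2 t x b y') (x - (t - b))
        - μ / (1 + b) * Ker μ ν2 t x b (x - (t - b)) = 0) := by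
  have hb1 : (0:ℝ) < 1 + b := by linarith
  open KernelCharAux in
  set s := Real.sqrt ((μ - 1)^2 - 4*ν2) with hs
  have hKer : Ker μ ν2 = Kg s μ := rfl
  rw [hKer]
  constructor
  · have hsq : ((x + (t - b)) - x)^2 = (t - b)^2 := by ring
    rw [(hasDerivAt_Kg_b s μ t x b _ hsq hb hbt).deriv,
      (hasDerivAt_Kg_y s μ t x b _ hsq hb hbt).deriv,
      Kg_at s μ t x b _ hsq]
    have ht1 : (0:ℝ) < 1 + t := by linarith
    have hQe : (t + b + 2)^2 - ((x + (t - b)) - x)^2 = 4*((1 + t)*(1 + b)) := by ring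
    rw [hQe]
    field_simp
    ring
  · have hsq : ((x - (t - b)) - x)^2 = (t - b)^2 := by ring
    rw [(hasDerivAt_Kg_b s μ t x b _ hsq hb hbt).deriv,
      (hasDerivAt_Kg_y s μ t x b _ hsq hb hbt).deriv,
      Kg_at s μ t x b _ hsq]
    have ht1 : (0:ℝ) < 1 + t := by linarith
    have hQe : (t + b + 2)^2 - ((x - (t - b)) - x)^2 = 4*((1 + t)*(1 + b)) := by ring
    rw [hQe]
    field_simp
    ring
end
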